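/- Let the vertices of the nondegenerate triangle P1P2P3 be counted counterclockwise and let P* = (x*, y*) be a point distinct from each vertex. Then with the weights m1* = |P*P1|·det[[1,1,1],[x*,x2,x3],[y*,y2,y3]], m2* = |P*P2|·det[[1,1,1],[x1,x*,x3],[y1,y*,y3]], m3* = |P*P3|·det[[1,1,1],[x1,x2,x*],[y1,y2,y*]], the function F(x,y) = Σ_{j=1}^3 m_j* √((x−x_j)² + (y−y_j)²) has a stationary point at P*, i.e. Σ_{j=1}^3 m_j* (x* − x_j)/√((x*−x_j)²+(y*−y_j)²) = 0 and Σ_{j=1}^3 m_j* (y* − y_j)/√((x*−x_j)²+(y*−y_j)²) = 0. -/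

import Mathlib

/-- Inverse Fermat–Torricelli problem: with the weights
`m_j* = |P*P_j| · (signed doubled area)`, the function `F` has a stationary
point at `P*`. -/
theorem inverse_problem_stationary
    (x1 y1 x2 y2 x3 y3 xs ys : ℝ)
    (hccw : 0 < Matrix.det !![(1:ℝ), 1, 1; x1, x2, x3; y1, y2, y3])
    (hne1 : (xs, ys) ≠ (x1, y1))
    (hne2 : (xs, ys) ≠ (x2, y2))
    (hne3 : (xs, ys) ≠ (x3, y3))
    (m1 m2 m3 : ℝ)
    (hm1 : m1 = Real.sqrt ((xs-x1)^2 + (ys-y1)^2)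
        * Matrix.det !![(1:ℝ), 1, 1; xs, x2, x3; ys, y2, y3])
    (hm2 : m2 = Real.sqrt ((xs-x2)^2 + (ys-y2)^2)
        * Matrix.det !![(1:ℝ), 1, 1; x1, xs, x3; y1, ys, y3])
    (hm3 : m3 = Real.sqrt ((xs-x3)^2 + (ys-y3)^2)
        * Matrix.det !![(1:ℝ), 1, 1; x1, x2, xs; y1, y2, ys]) :
    (m1*(xs-x1)/Real.sqrt ((xs-x1)^2 + (ys-y1)^2)
      + m2*(xs-x2)/Real.sqrt ((xs-x2)^2 + (ys-y2)^2)
      + m3*(xs-x3)/Real.sqrt ((xs-x3)^2 + (ys-y3)^2) = 0) ∧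
    (m1*(ys-y1)/Real.sqrt ((xs-x1)^2 + (ys-y1)^2)
      + m2*(ys-y2)/Real.sqrt ((xs-x2)^2 + (ys-y2)^2)
      + m3*(ys-y3)/Real.sqrt ((xs-x3)^2 + (ys-y3)^2) = 0) := by
  have key : ∀ a b : ℝ, (a, b) ≠ (xs, ys) → Real.sqrt ((xs-a)^2 + (ys-b)^2) ≠ 0 := by
    intro a b h
    have : (xs-a)^2 + (ys-b)^2 > 0 := by
      rcases eq_or_ne xs a with h1 | h1
      · have h2 : ys ≠ b := by
          intro h2; exact h (Prod.ext h1.symm h2.symm)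
        have := sq_pos_of_ne_zero (sub_ne_zero.2 h2)
        nlinarith [sq_nonneg (xs-a)]
      · have := sq_pos_of_ne_zero (sub_ne_zero.2 h1)
        nlinarith [sq_nonneg (ys-b)]
    exact (Real.sqrt_pos.2 this).ne'
  have h1 := key x1 y1 (fun h => hne1 h.symm)
  have h2 := key x2 y2 (fun h => hne2 h.symm)
  have h3 := key x3 y3 (fun h => hne3 h.symm)
  subst hm1 hm2 hm3
  simp only [Matrix.det_fin_three, Matrix.cons_val', Matrix.cons_val_zero, Matrix.cons_val_one,
    Matrix.head_cons, Matrix.head_fin_const, Matrix.cons_val_fin_one, Matrix.empty_val',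
    Matrix.cons_val_two, Matrix.tail_cons, Matrix.of_apply]
  constructor <;> field_simp <;> ring
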